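/- Let H, K₁, K₂ be real Hilbert spaces, let A : H → K₁ and B : H → K₂ be continuous linear maps, let ε > 0, δ ≥ 0, and let M be a closed linear subspace of H. Let f*, f^δ ∈ K₂ satisfy ‖f^δ − f*‖ ≤ δ. Suppose u* ∈ M satisfies A u* = 0 and B u* = f* (the exact solution), and suppose u_δ ∈ M minimizes J_δ(u) = ‖A u‖² + ‖B u − f^δ‖² + ε‖u‖² over M. Then, with h = u_δ − u*, the following stability estimate holds: ‖A h‖² + (1/2)·‖B h‖² + (ε/2)·‖h‖² ≤ (1/2)·δ² + (ε/2)·‖u*‖². -/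
import Mathlib


open RealInnerProductSpace

set_option maxHeartbeats 1000000

theorem stmt6
    {H K₁ K₂ : Type*}
    [NormedAddCommGroup H] [InnerProductSpace ℝ H] [CompleteSpace H]
    [NormedAddCommGroup K₁] [InnerProductSpace ℝ K₁] [CompleteSpace K₁]
    [NormedAddCommGroup K₂] [InnerProductSpace ℝ K₂] [CompleteSpace K₂]
    (A : H →L[ℝ] K₁) (B : H →L[ℝ] K₂) (ε δ : ℝ) (hε : 0 < ε) (hδ : 0 ≤ δ)
    (M : Submodule ℝ H) (hM : IsClosed (M : Set H))
    (fstar fdel : K₂) (hnoise : ‖fdel - fstar‖ ≤ δ)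
    (Jδ : H → ℝ) (hJδ : ∀ u, Jδ u = ‖A u‖ ^ 2 + ‖B u - fdel‖ ^ 2 + ε * ‖u‖ ^ 2)
    (ustar : H) (hustar : ustar ∈ M) (hA : A ustar = 0) (hB : B ustar = fstar)
    (udel : H) (hudel : udel ∈ M) (hmin : ∀ v ∈ M, Jδ udel ≤ Jδ v) :
    ‖A (udel - ustar)‖ ^ 2 + (1 / 2) * ‖B (udel - ustar)‖ ^ 2
        + (ε / 2) * ‖udel - ustar‖ ^ 2
      ≤ (1 / 2) * δ ^ 2 + (ε / 2) * ‖ustar‖ ^ 2 := by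
  set h : H := udel - ustar with hh
  set e : K₂ := fdel - fstar with he
  -- First-order optimality: the linear term L vanishes
  set L : ℝ := ⟪A udel, A h⟫ + ⟪B udel - fdel, B h⟫ + ε * ⟪udel, h⟫ with hL
  set Q : ℝ := ‖A h‖ ^ 2 + ‖B h‖ ^ 2 + ε * ‖h‖ ^ 2 with hQ
  have hQ0 : 0 ≤ Q := by positivity
  have hkey : ∀ t : ℝ, 0 ≤ 2 * t * L + t ^ 2 * Q := by
    intro t
    have hmem : udel + t • h ∈ M := M.add_mem hudel (M.smul_mem t (M.sub_mem hudel hustar))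
    have := hmin _ hmem
    rw [hJδ, hJδ] at this
    have e1 : A (udel + t • h) = A udel + t • A h := by simp
    have e2 : B (udel + t • h) - fdel = (B udel - fdel) + t • B h := by
      simp [map_add, map_smul]; abel
    rw [e1, e2] at this
    have n1 : ‖A udel + t • A h‖ ^ 2
        = ‖A udel‖ ^ 2 + 2 * (t * ⟪A udel, A h⟫) + t ^ 2 * ‖A h‖ ^ 2 := by
      rw [norm_add_sq_real, real_inner_smul_right, norm_smul]
      simp [mul_pow]
    have n2 : ‖(B udel - fdel) + t • B h‖ ^ 2
        = ‖B udel - fdel‖ ^ 2 + 2 * (t * ⟪B udel - fdel, B h⟫) + t ^ 2 * ‖B h‖ ^ 2 := by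
      rw [norm_add_sq_real, real_inner_smul_right, norm_smul]
      simp [mul_pow]
    have n3 : ‖udel + t • h‖ ^ 2
        = ‖udel‖ ^ 2 + 2 * (t * ⟪udel, h⟫) + t ^ 2 * ‖h‖ ^ 2 := by
      rw [norm_add_sq_real, real_inner_smul_right, norm_smul]
      simp [mul_pow]
    rw [n1, n2, n3] at this
    simp only [hL, hQ]
    nlinarith [this]
  have hL0 : L = 0 := by
    by_contra hne
    have h1 := hkey (-L / (Q + 1))
    have hQ1 : (0:ℝ) < Q + 1 := by linarith
    have h2 : 2 * (-L / (Q + 1)) * L + (-L / (Q + 1)) ^ 2 * Q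
        = -(L ^ 2 * (Q + 2)) / (Q + 1) ^ 2 := by
      field_simp
      ring
    rw [h2] at h1
    have h3 : 0 < L ^ 2 * (Q + 2) := by positivity
    have h4 : (0:ℝ) < (Q + 1) ^ 2 := by positivity
    have h5 : -(L ^ 2 * (Q + 2)) / (Q + 1) ^ 2 < 0 :=
      div_neg_of_neg_of_pos (by linarith) h4
    linarith
  -- Rewrite L using the structure of the exact solution
  have hAh : A udel = A h := by rw [hh, map_sub, hA, sub_zero]
  have hBh : B udel - fdel = B h - e := by
    rw [hh, he, map_sub, hB]; abel
  have i1 : ⟪A udel, A h⟫ = ‖A h‖ ^ 2 := by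
    rw [hAh, real_inner_self_eq_norm_sq]
  have i2 : ⟪B udel - fdel, B h⟫ = ‖B h‖ ^ 2 - ⟪e, B h⟫ := by
    rw [hBh, inner_sub_left, real_inner_self_eq_norm_sq]
  have i3 : ⟪udel, h⟫ = ‖h‖ ^ 2 + ⟪ustar, h⟫ := by
    have hud : udel = h + ustar := by rw [hh]; abel
    rw [hud, inner_add_left, real_inner_self_eq_norm_sq]
  have heq : ‖A h‖ ^ 2 + ‖B h‖ ^ 2 + ε * ‖h‖ ^ 2 = ⟪e, B h⟫ - ε * ⟪ustar, h⟫ := by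
    have := hL0
    rw [hL, i1, i2, i3] at this
    linarith
  -- Cauchy–Schwarz bounds
  have cs1 : ⟪e, B h⟫ ≤ ‖e‖ * ‖B h‖ := real_inner_le_norm e (B h)
  have cs2 : -⟪ustar, h⟫ ≤ ‖ustar‖ * ‖h‖ := by
    have := real_inner_le_norm (-ustar) h
    simpa [norm_neg] using this
  have hed : ‖e‖ ≤ δ := hnoise
  have b1 : ⟪e, B h⟫ ≤ (1/2) * δ ^ 2 + (1/2) * ‖B h‖ ^ 2 := by
    have m1 : ‖e‖ * ‖B h‖ ≤ δ * ‖B h‖ :=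
      mul_le_mul_of_nonneg_right hed (norm_nonneg _)
    nlinarith [sq_nonneg (δ - ‖B h‖)]
  have b2 : -⟪ustar, h⟫ ≤ (1/2) * ‖ustar‖ ^ 2 + (1/2) * ‖h‖ ^ 2 := by
    nlinarith [sq_nonneg (‖ustar‖ - ‖h‖)]
  have b3 : ε * (-⟪ustar, h⟫) ≤ ε * ((1/2) * ‖ustar‖ ^ 2 + (1/2) * ‖h‖ ^ 2) :=
    mul_le_mul_of_nonneg_left b2 hε.le
  linarith [heq, b1, b3]
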